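/- arXiv:1207.6670 — 2 statements merged into one kernel-verified Lean document; each statement's English description precedes it below -/
import Mathlib

section
/- Let 1 < p < ∞, T > 0, q ∈ C([0,T]; [0,∞)) with q ≢ 0, and m ∈ C([0,T]) a sign-changing weight. Define λ₀⁺ = inf { ∫₀ᵀ (|u'|^p + q|u|^p) dx : u ∈ W_T^{1,p}(0,T), ∫₀ᵀ m |u|^p dx = 1 }, where W_T^{1,p}(0,T) = {u ∈ W^{1,p}(0,T) : u(0) = u(T)}. Then λ₀⁺ > 0. -/
open Set intervalIntegral

/-- integral of a nonneg continuous function over a subinterval is at most over the whole. -/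
lemma sub_integral_le {g : ℝ → ℝ} {a b c d : ℝ} (hac : a ≤ c) (hcd : c ≤ d) (hdb : d ≤ b)
    (hg : ContinuousOn g (Icc a b)) (hg0 : ∀ x ∈ Icc a b, 0 ≤ g x) :
    (∫ x in c..d, g x) ≤ ∫ x in a..b, g x := by
  have hab : a ≤ b := le_trans hac (le_trans hcd hdb)
  have h1 : IntervalIntegrable g MeasureTheory.volume a c :=
    (hg.mono (Icc_subset_Icc le_rfl (le_trans hcd hdb))).intervalIntegrable_of_Icc hac
  have h2 : IntervalIntegrable g MeasureTheory.volume c d :=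
    (hg.mono (Icc_subset_Icc hac hdb)).intervalIntegrable_of_Icc hcd
  have h3 : IntervalIntegrable g MeasureTheory.volume d b :=
    (hg.mono (Icc_subset_Icc (le_trans hac hcd) le_rfl)).intervalIntegrable_of_Icc hdb
  have e1 := integral_add_adjacent_intervals h1 h2
  have e2 := integral_add_adjacent_intervals (h1.trans h2) h3
  have n1 : 0 ≤ ∫ x in a..c, g x :=
    intervalIntegral.integral_nonneg hac (fun x hx => hg0 x ⟨hx.1, le_trans hx.2 (le_trans hcd hdb)⟩)
  have n3 : 0 ≤ ∫ x in d..b, g x :=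
    intervalIntegral.integral_nonneg hdb (fun x hx => hg0 x ⟨le_trans (le_trans hac hcd) hx.1, hx.2⟩)
  linarith [e1, e2]

/-- elementary: t ≤ λ + t^p/λ^(p-1) for t ≥ 0, λ > 0, p ≥ 1. -/
lemma le_lam_add {t lam p : ℝ} (ht : 0 ≤ t) (hlam : 0 < lam) (hp : 1 ≤ p) :
    t ≤ lam + t ^ p / lam ^ (p - 1) := by
  rcases le_or_gt t lam with h | h
  · have : 0 ≤ t ^ p / lam ^ (p - 1) :=
      div_nonneg (Real.rpow_nonneg ht p) (Real.rpow_nonneg hlam.le _)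
    linarith
  · have hlp : (0:ℝ) < lam ^ (p - 1) := Real.rpow_pos_of_pos hlam _
    have h1 : lam ^ (p - 1) ≤ t ^ (p - 1) := Real.rpow_le_rpow hlam.le h.le (by linarith)
    have htpos : 0 < t := hlam.trans h
    have h2 : t * lam ^ (p - 1) ≤ t ^ p := by
      have e : t ^ p = t * t ^ (p - 1) := by
        have h3 := Real.rpow_add htpos 1 (p - 1)
        rw [Real.rpow_one] at h3
        rw [← h3]
        congr 1
        ring
      rw [e]
      exact mul_le_mul_of_nonneg_left h1 ht
    have : t ≤ t ^ p / lam ^ (p - 1) := (le_div_iff₀ hlp).mpr h2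
    linarith

theorem principal_eigenvalue_positive
    (T p : ℝ) (hT : 0 < T) (hp : 1 < p)
    (q : ℝ → ℝ) (hq : ContinuousOn q (Icc 0 T)) (hq0 : ∀ x ∈ Icc 0 T, 0 ≤ q x)
    (hqne : ∃ x ∈ Icc 0 T, q x ≠ 0)
    (m : ℝ → ℝ) (hm : ContinuousOn m (Icc 0 T))
    (hsign : (∃ x ∈ Icc 0 T, 0 < m x) ∧ ∃ x ∈ Icc 0 T, m x < 0)
    (S : Set ℝ)
    (hS : S = { y : ℝ | ∃ u : ℝ → ℝ, ContDiff ℝ 1 u ∧ u 0 = u T ∧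
        (∫ x in (0:ℝ)..T, m x * |u x| ^ p) = 1 ∧
        y = ∫ x in (0:ℝ)..T, (|deriv u x| ^ p + q x * |u x| ^ p) })
    (hne : S.Nonempty) :
    0 < sInf S := by
  have hp0 : (0:ℝ) < p := by linarith
  have hIccne : (Icc (0:ℝ) T).Nonempty := ⟨0, left_mem_Icc.mpr hT.le⟩
  -- bound M on |m|
  obtain ⟨xM, hxM, hM⟩ := isCompact_Icc.exists_isMaxOn hIccne (continuous_abs.comp_continuousOn hm)
  set M : ℝ := |m xM| with hMdef
  obtain ⟨xm, hxm, hxmpos⟩ := hsign.1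
  have hMpos : 0 < M := lt_of_lt_of_le hxmpos (le_trans (le_abs_self _) (hM hxm))
  have hMbd : ∀ x ∈ Icc 0 T, |m x| ≤ M := fun x hx => hM hx
  -- interval where q ≥ δ
  obtain ⟨x₀, hx₀, hq₀⟩ := hqne
  have hq₀pos : 0 < q x₀ := lt_of_le_of_ne (hq0 x₀ hx₀) (Ne.symm hq₀)
  set δ : ℝ := q x₀ / 2 with hδdef
  have hδpos : 0 < δ := by positivity
  have hnb : q ⁻¹' (Ioi δ) ∈ nhdsWithin x₀ (Icc 0 T) :=
    (hq x₀ hx₀) (Ioi_mem_nhds (by simp [hδdef]; linarith))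
  obtain ⟨ε, hεpos, hεsub⟩ := Metric.mem_nhdsWithin_iff.mp hnb
  set a : ℝ := max 0 (x₀ - ε/2) with hadef
  set b : ℝ := min T (x₀ + ε/2) with hbdef
  have hx₀0 : 0 ≤ x₀ := hx₀.1
  have hx₀T : x₀ ≤ T := hx₀.2
  have hab : a < b := by
    rw [hadef, hbdef, max_lt_iff, lt_min_iff, lt_min_iff]
    constructor <;> constructor <;> linarith
  have ha0 : 0 ≤ a := le_max_left _ _
  have hbT : b ≤ T := min_le_left _ _
  have hsubIcc : Icc a b ⊆ Icc 0 T := Icc_subset_Icc ha0 hbT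
  have hqδ : ∀ x ∈ Icc a b, δ ≤ q x := by
    intro x hx
    have h1 : x ∈ Metric.ball x₀ ε ∩ Icc 0 T := by
      constructor
      · have hax : x₀ - ε/2 ≤ x := le_trans (le_max_right _ _) hx.1
        have hbx : x ≤ x₀ + ε/2 := le_trans hx.2 (min_le_right _ _)
        rw [Metric.mem_ball, Real.dist_eq, abs_sub_lt_iff]
        constructor <;> linarith
      · exact hsubIcc hx
    exact (hεsub h1).le
  -- the lower bound for max |u|
  set N₀ : ℝ := (1 / (M * T)) ^ (1/p) with hN₀def
  have hN₀pos : 0 < N₀ := Real.rpow_pos_of_pos (by positivity) _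
  set lam : ℝ := N₀ / (4 * T) with hlamdef
  have hlampos : 0 < lam := by positivity
  set c : ℝ := min (δ * (b - a) * (N₀/4) ^ p) (lam ^ (p-1) * (N₀/4)) with hcdef
  have hcpos : 0 < c := by
    apply lt_min
    · have : (0:ℝ) < (N₀/4) ^ p := Real.rpow_pos_of_pos (by positivity) _
      have h2 : 0 < b - a := by linarith
      positivity
    · have : (0:ℝ) < lam ^ (p-1) := Real.rpow_pos_of_pos hlampos _
      positivity
  refine lt_of_lt_of_le hcpos (le_csInf hne ?_)
  rintro y hy
  rw [hS] at hy
  obtain ⟨u, hu, huper, hcon, hyE⟩ := hy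
  by_contra hlt
  push_neg at hlt
  -- continuity facts
  have hud : Continuous (deriv u) := hu.continuous_deriv le_rfl
  have huc : Continuous u := hu.continuous
  have hup : Continuous (fun x => |u x| ^ p) :=
    (huc.abs).rpow_const (fun x => Or.inr hp0.le)
  have hdp : Continuous (fun x => |deriv u x| ^ p) :=
    (hud.abs).rpow_const (fun x => Or.inr hp0.le)
  have hqup : ContinuousOn (fun x => q x * |u x| ^ p) (Icc 0 T) :=
    hq.mul hup.continuousOn
  have hqup_nn : ∀ x ∈ Icc 0 T, 0 ≤ q x * |u x| ^ p := fun x hx =>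
    mul_nonneg (hq0 x hx) (Real.rpow_nonneg (abs_nonneg _) _)
  have hint1 : IntervalIntegrable (fun x => |deriv u x| ^ p) MeasureTheory.volume 0 T :=
    hdp.intervalIntegrable 0 T
  have hint2 : IntervalIntegrable (fun x => q x * |u x| ^ p) MeasureTheory.volume 0 T :=
    hqup.intervalIntegrable_of_Icc hT.le
  set I1 : ℝ := ∫ x in (0:ℝ)..T, |deriv u x| ^ p with hI1def
  set I2 : ℝ := ∫ x in (0:ℝ)..T, q x * |u x| ^ p with hI2def
  have hE : y = I1 + I2 := by
    rw [hyE, intervalIntegral.integral_add hint1 hint2]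
  have hI1nn : 0 ≤ I1 := intervalIntegral.integral_nonneg hT.le
    (fun x _ => Real.rpow_nonneg (abs_nonneg _) _)
  have hI2nn : 0 ≤ I2 := intervalIntegral.integral_nonneg hT.le (fun x hx => hqup_nn x hx)
  -- max of |u| on [0,T]
  obtain ⟨xN, hxN, hN⟩ := isCompact_Icc.exists_isMaxOn hIccne (huc.abs.continuousOn)
  set N : ℝ := |u xN| with hNdef
  have hNnn : 0 ≤ N := abs_nonneg _
  -- min of |u| on [a,b]
  obtain ⟨xμ, hxμ, hμ⟩ := isCompact_Icc.exists_isMinOn ⟨a, left_mem_Icc.mpr hab.le⟩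
    (huc.abs.continuousOn)
  set μ : ℝ := |u xμ| with hμdef
  have hμnn : 0 ≤ μ := abs_nonneg _
  -- (i) 1 ≤ M * N^p * T
  have hconstraint : (1:ℝ) ≤ M * N ^ p * T := by
    have hb : ∀ x ∈ Set.uIoc (0:ℝ) T, ‖m x * |u x| ^ p‖ ≤ M * N ^ p := by
      intro x hx
      rw [uIoc_of_le hT.le] at hx
      have hx' : x ∈ Icc (0:ℝ) T := ⟨hx.1.le, hx.2⟩
      rw [Real.norm_eq_abs, abs_mul, abs_of_nonneg (Real.rpow_nonneg (abs_nonneg _) _)]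
      exact mul_le_mul (hMbd x hx') (Real.rpow_le_rpow (abs_nonneg _) (hN hx') hp0.le)
        (Real.rpow_nonneg (abs_nonneg _) _) hMpos.le
    have := intervalIntegral.norm_integral_le_of_norm_le_const hb
    rw [hcon] at this
    simp only [norm_one, sub_zero, abs_of_pos hT] at this
    linarith
  -- N ≥ N₀
  have hNge : N₀ ≤ N := by
    by_contra hcon2
    push_neg at hcon2
    have h1 : N ^ p < N₀ ^ p := Real.rpow_lt_rpow hNnn hcon2 hp0
    have h2 : N₀ ^ p = 1 / (M * T) := by
      rw [hN₀def, ← Real.rpow_mul (by positivity), one_div_mul_cancel (ne_of_gt hp0),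
        Real.rpow_one]
    rw [h2] at h1
    have h3 : N ^ p * (M * T) < 1 := by
      rw [lt_div_iff₀ (by positivity)] at h1
      linarith
    nlinarith
  -- (iii) δ (b-a) μ^p ≤ I2
  have hI2ge : δ * (b - a) * μ ^ p ≤ I2 := by
    have step1 : (∫ x in a..b, δ * μ ^ p) ≤ ∫ x in a..b, q x * |u x| ^ p := by
      apply intervalIntegral.integral_mono_on hab.le intervalIntegrable_const
        ((hqup.mono hsubIcc).intervalIntegrable_of_Icc hab.le)
      intro x hx
      exact mul_le_mul (hqδ x hx)
        (Real.rpow_le_rpow hμnn (hμ hx) hp0.le) (Real.rpow_nonneg hμnn _) (hq0 x (hsubIcc hx))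
    have step2 : (∫ x in a..b, q x * |u x| ^ p) ≤ I2 :=
      sub_integral_le ha0 hab.le hbT hqup hqup_nn
    rw [intervalIntegral.integral_const, smul_eq_mul] at step1
    calc δ * (b - a) * μ ^ p = (b - a) * (δ * μ ^ p) := by ring
    _ ≤ _ := le_trans step1 step2
  -- (v) N ≤ μ + ∫ |u'|
  set J : ℝ := ∫ x in (0:ℝ)..T, |deriv u x| with hJdef
  have hosc : ∀ s t : ℝ, s ∈ Icc 0 T → t ∈ Icc 0 T → s ≤ t → |u t - u s| ≤ J := by
    intro s t hs ht hst
    have hft : ∫ x in s..t, deriv u x = u t - u s :=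
      intervalIntegral.integral_deriv_eq_sub (fun x _ => (hu.differentiable one_ne_zero).differentiableAt)
        (hud.intervalIntegrable s t)
    rw [← hft]
    calc |∫ x in s..t, deriv u x| ≤ ∫ x in s..t, |deriv u x| := by
          have := intervalIntegral.norm_integral_le_integral_norm (f := deriv u)
            (μ := MeasureTheory.volume) hst
          simpa using this
    _ ≤ J := sub_integral_le hs.1 hst ht.2 hud.abs.continuousOn (fun x _ => abs_nonneg _)
  have hNμ : N ≤ μ + J := by
    have hxμ' : xμ ∈ Icc 0 T := hsubIcc hxμ
    rcases le_total xμ xN with h | h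
    · have h1 := hosc xμ xN hxμ' hxN h
      have h2 : N - μ ≤ |u xN - u xμ| := abs_sub_abs_le_abs_sub _ _
      linarith
    · have h1 := hosc xN xμ hxN hxμ' h
      have h2 : N - μ ≤ |u xN - u xμ| := abs_sub_abs_le_abs_sub _ _
      rw [abs_sub_comm] at h2
      linarith
  -- (iv) J ≤ lam*T + I1/lam^(p-1)
  have hJle : J ≤ lam * T + I1 / lam ^ (p-1) := by
    have step : J ≤ ∫ x in (0:ℝ)..T, (lam + |deriv u x| ^ p / lam ^ (p-1)) := by
      apply intervalIntegral.integral_mono_on hT.le (hud.abs.intervalIntegrable 0 T)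
        ((intervalIntegrable_const).add ((hdp.div_const _).intervalIntegrable 0 T))
      intro x _
      exact le_lam_add (abs_nonneg _) hlampos hp.le
    have split : (∫ x in (0:ℝ)..T, (lam + |deriv u x| ^ p / lam ^ (p-1)))
        = lam * T + I1 / lam ^ (p-1) := by
      rw [intervalIntegral.integral_add (intervalIntegrable_const)
        ((hdp.div_const _).intervalIntegrable 0 T),
        intervalIntegral.integral_const, intervalIntegral.integral_div, smul_eq_mul, sub_zero,
        mul_comm T lam]
    rw [split] at step
    exact step
  -- final contradiction
  have hc1 : y < δ * (b - a) * (N₀/4) ^ p := lt_of_lt_of_le hlt (min_le_left _ _)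
  have hc2 : y < lam ^ (p-1) * (N₀/4) := lt_of_lt_of_le hlt (min_le_right _ _)
  have hμlt : μ < N₀ / 4 := by
    by_contra hge
    push_neg at hge
    have : (N₀/4) ^ p ≤ μ ^ p := Real.rpow_le_rpow (by positivity) hge hp0.le
    have h4 : δ * (b - a) * (N₀/4) ^ p ≤ δ * (b - a) * μ ^ p := by
      apply mul_le_mul_of_nonneg_left this
      have : 0 < b - a := by linarith
      positivity
    linarith [hI2ge, hE, hI1nn]
  have hI1lt : I1 / lam ^ (p-1) < N₀ / 4 := by
    have hlp : (0:ℝ) < lam ^ (p-1) := Real.rpow_pos_of_pos hlampos _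
    rw [div_lt_iff₀ hlp]
    calc I1 ≤ y := by linarith [hE, hI2nn]
    _ < lam ^ (p-1) * (N₀/4) := hc2
    _ = N₀ / 4 * lam ^ (p-1) := by ring
  have hlamT : lam * T = N₀ / 4 := by
    rw [hlamdef]
    field_simp
  have : N < N₀ := by
    calc N ≤ μ + J := hNμ
    _ ≤ μ + (lam * T + I1 / lam ^ (p-1)) := by linarith
    _ < N₀/4 + (N₀/4 + N₀/4) := by rw [hlamT]; linarith
    _ < N₀ := by linarith
  linarith
end

section
/- Let 1 < p < ∞ and suppose u ∈ C¹[0,T] with φ_p(u') ∈ C¹[0,T] satisfies -(φ_p(u'))' + q φ_p(u) = λ m φ_p(u) + g(x, u, λ) on (0,T), where g satisfies |g(x,s,λ)| ≤ C(λ, ‖u‖_∞) |s|^{p-1} for all s with |s| ≤ ‖u‖_∞. If u has a double zero x* ∈ [0,T] (i.e. u(x*) = u'(x*) = 0), then u ≡ 0 on [0,T]. -/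
open Set Real Filter Topology

lemma abs_phi' (r t : ℝ) (hr : 1 < r) : |(|t| ^ (r-2) * t)| = |t| ^ (r-1) := by
  rcases eq_or_ne t 0 with h | h
  · simp [h, Real.zero_rpow (by intro hh; linarith : r - 1 ≠ 0)]
  · have ht : (0:ℝ) < |t| := abs_pos.2 h
    rw [abs_mul, abs_rpow_of_nonneg (abs_nonneg t), abs_abs,
      ← Real.rpow_add_one (ne_of_gt ht)]
    ring_nf

lemma young_aux (a b r : ℝ) (ha : 0 ≤ a) (hb : 0 ≤ b) (hr : 1 < r) :
    a ^ (r-1) * b ≤ a ^ r + b ^ r := by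
  rcases le_total b a with h | h
  · calc a ^ (r-1) * b ≤ a ^ (r-1) * a := by
          exact mul_le_mul_of_nonneg_left h (Real.rpow_nonneg ha _)
      _ = a ^ r := by
          rcases eq_or_lt_of_le ha with h0 | h0
          · rw [← h0]
            rw [Real.zero_rpow (by intro hh; linarith : r - 1 ≠ 0),
              Real.zero_rpow (by intro hh; linarith : r ≠ 0)]
            ring
          · rw [← Real.rpow_add_one (ne_of_gt h0)]; ring_nf
      _ ≤ a ^ r + b ^ r := le_add_of_nonneg_right (Real.rpow_nonneg hb _)
  · calc a ^ (r-1) * b ≤ b ^ (r-1) * b := by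
          exact mul_le_mul_of_nonneg_right
            (Real.rpow_le_rpow ha h (by linarith)) hb
      _ = b ^ r := by
          rcases eq_or_lt_of_le hb with h0 | h0
          · rw [← h0]
            rw [Real.zero_rpow (by intro hh; linarith : r - 1 ≠ 0),
              Real.zero_rpow (by intro hh; linarith : r ≠ 0)]; ring
          · rw [← Real.rpow_add_one (ne_of_gt h0)]; ring_nf
      _ ≤ a ^ r + b ^ r := le_add_of_nonneg_left (Real.rpow_nonneg ha _)

lemma gronwall_zero_right (a b K : ℝ) (hK : 0 ≤ K) (E E' : ℝ → ℝ)
    (hcont : ContinuousOn E (Icc a b))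
    (hderiv : ∀ x ∈ Ioo a b, HasDerivAt E (E' x) x)
    (hbound : ∀ x ∈ Ioo a b, |E' x| ≤ K * |E x|)
    (c : ℝ) (hc : c ∈ Icc a b) (hEc : E c = 0) :
    ∀ x ∈ Icc c b, E x = 0 := by
  intro x hx
  rcases eq_or_lt_of_le hx.1 with h | hcx
  · rw [← h]; exact hEc
  have hxb : x ≤ b := hx.2
  have hca : a ≤ c := hc.1
  have key : ∀ δ : ℝ, 0 < δ → |E x| ≤ δ := by
    intro δ hδ
    set δ' : ℝ := δ / Real.exp (K * (b - a)) with hδ'def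
    have hδ' : 0 < δ' := div_pos hδ (Real.exp_pos _)
    have hclos : c ∈ closure (Ioo c x) := by
      rw [closure_Ioo (ne_of_lt hcx)]; exact ⟨le_refl c, le_of_lt hcx⟩
    have hne : (nhdsWithin c (Ioo c x)).NeBot :=
      mem_closure_iff_nhdsWithin_neBot.1 hclos
    have hsub : Ioo c x ⊆ Icc a b := fun y hy =>
      ⟨le_trans hca (le_of_lt hy.1), le_trans (le_of_lt hy.2) hxb⟩
    have htend : Tendsto E (nhdsWithin c (Ioo c x)) (nhds 0) := by
      rw [← hEc]
      exact ((hcont c hc).mono hsub).tendsto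
    have hev : ∀ᶠ y in nhdsWithin c (Ioo c x), |E y| < δ' := by
      have := Metric.tendsto_nhds.1 htend δ' hδ'
      simpa [Real.dist_eq] using this
    obtain ⟨s, hsE, hs⟩ := (hev.and (eventually_mem_nhdsWithin)).exists
    have has : a < s := lt_of_le_of_lt hca hs.1
    have hG := norm_le_gronwallBound_of_norm_deriv_right_le (f := E) (f' := E')
      (δ := δ') (K := K) (ε := 0) (a := s) (b := x)
      (hcont.mono (fun y hy => ⟨le_trans (le_of_lt has) hy.1, le_trans hy.2 hxb⟩))
      (fun y hy => (hderiv y ⟨lt_of_lt_of_le has hy.1,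
        lt_of_lt_of_le hy.2 hxb⟩).hasDerivWithinAt)
      (by rw [Real.norm_eq_abs]; exact le_of_lt hsE)
      (fun y hy => by
        rw [Real.norm_eq_abs, Real.norm_eq_abs, add_zero]
        exact hbound y ⟨lt_of_lt_of_le has hy.1, lt_of_lt_of_le hy.2 hxb⟩)
    have := hG x ⟨le_of_lt hs.2, le_refl x⟩
    rw [Real.norm_eq_abs, gronwallBound_ε0] at this
    calc |E x| ≤ δ' * Real.exp (K * (x - s)) := this
      _ ≤ δ' * Real.exp (K * (b - a)) := by
          apply mul_le_mul_of_nonneg_left _ (le_of_lt hδ')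
          apply Real.exp_le_exp.2
          apply mul_le_mul_of_nonneg_left _ hK
          linarith [hs.1]
      _ = δ := by
          rw [hδ'def, div_mul_cancel₀]
          exact ne_of_gt (Real.exp_pos _)
  have h0 : |E x| ≤ 0 := by
    by_contra h
    push_neg at h
    have := key (|E x| / 2) (by linarith)
    linarith
  have := abs_nonneg (E x)
  have : |E x| = 0 := le_antisymm h0 this
  exact abs_eq_zero.1 this

lemma gronwall_zero (a b K : ℝ) (hK : 0 ≤ K) (E E' : ℝ → ℝ)
    (hcont : ContinuousOn E (Icc a b))
    (hderiv : ∀ x ∈ Ioo a b, HasDerivAt E (E' x) x)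
    (hbound : ∀ x ∈ Ioo a b, |E' x| ≤ K * |E x|)
    (c : ℝ) (hc : c ∈ Icc a b) (hEc : E c = 0) :
    ∀ x ∈ Icc a b, E x = 0 := by
  intro x hx
  rcases le_total c x with h | h
  · exact gronwall_zero_right a b K hK E E' hcont hderiv hbound c hc hEc x ⟨h, hx.2⟩
  · -- reflection
    set F : ℝ → ℝ := fun t => E (a + b - t) with hF
    set F' : ℝ → ℝ := fun t => -(E' (a + b - t)) with hF'
    have hmap : ∀ t ∈ Icc a b, a + b - t ∈ Icc a b := fun t ht =>
      ⟨by linarith [ht.2], by linarith [ht.1]⟩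
    have hFc : ∀ t ∈ Icc (a + b - c) b, F t = 0 := by
      apply gronwall_zero_right a b K hK F F'
      · apply ContinuousOn.comp hcont (by fun_prop)
        intro t ht; exact hmap t ht
      · intro t ht
        have h1 : HasDerivAt (fun t : ℝ => a + b - t) (-1 : ℝ) t := by
          simpa using (hasDerivAt_id t).const_sub (a + b)
        have h2 := (hderiv (a + b - t) ⟨by linarith [ht.2], by linarith [ht.1]⟩).comp t h1
        simpa [hF, hF', mul_comm, Function.comp_def] using h2
      · intro t ht
        have := hbound (a + b - t) ⟨by linarith [ht.2], by linarith [ht.1]⟩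
        simpa [hF, hF'] using this
      · exact ⟨by linarith [hc.2], by linarith [hc.1]⟩
      · show E (a + b - (a + b - c)) = 0
        rw [show a + b - (a + b - c) = c by ring]; exact hEc
    have := hFc (a + b - x) ⟨by linarith, by linarith [hx.1]⟩
    simpa [hF, show a + b - (a + b - x) = x by ring] using this

theorem double_zero_implies_trivial
    (T p lam M C : ℝ) (hT : 0 < T) (hp : 1 < p) (hC : 0 ≤ C)
    (q m : ℝ → ℝ) (hq : ContinuousOn q (Icc 0 T)) (hq0 : ∀ x ∈ Icc 0 T, 0 ≤ q x)
    (hm : ContinuousOn m (Icc 0 T))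
    (g : ℝ → ℝ → ℝ → ℝ)
    (u u' w' : ℝ → ℝ)
    (hu : ∀ x ∈ Icc 0 T, HasDerivAt u (u' x) x)
    (hu' : ContinuousOn u' (Icc 0 T))
    (hw : ∀ x ∈ Ioo 0 T, HasDerivAt (fun y => |u' y| ^ (p - 2) * u' y) (w' x) x)
    (heq : ∀ x ∈ Ioo 0 T,
        -(w' x) + q x * (|u x| ^ (p - 2) * u x)
          = lam * m x * (|u x| ^ (p - 2) * u x) + g x (u x) lam)
    (hM : ∀ x ∈ Icc 0 T, |u x| ≤ M)
    (hg : ∀ x ∈ Icc 0 T, ∀ s : ℝ, |s| ≤ M → |g x s lam| ≤ C * |s| ^ (p - 1))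
    (x₀ : ℝ) (hx₀ : x₀ ∈ Icc 0 T) (hu0 : u x₀ = 0) (hu'0 : u' x₀ = 0) :
    ∀ x ∈ Icc 0 T, u x = 0 := by
  have hp0 : (0:ℝ) < p := by linarith
  have hp1 : (0:ℝ) < p - 1 := by linarith
  have hpne : p ≠ 0 := ne_of_gt hp0
  set p' : ℝ := p / (p - 1) with hp'def
  have hp' : 1 < p' := by
    rw [hp'def, lt_div_iff₀ hp1]; linarith
  have hmul : (p - 1) * p' = p := by
    rw [hp'def]; field_simp
  have hmul1 : (p - 1) * (p' - 1) = 1 := by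
    rw [hp'def]; field_simp; ring
  set V : ℝ → ℝ := fun y => |u' y| ^ (p - 2) * u' y with hVdef
  have hVabs : ∀ y, |V y| = |u' y| ^ (p - 1) := fun y => abs_phi' p (u' y) hp
  have hVp' : ∀ y, |V y| ^ p' = |u' y| ^ p := by
    intro y
    rw [hVabs y, ← Real.rpow_mul (abs_nonneg _), hmul]
  have hVp1 : ∀ y, |V y| ^ (p' - 1) = |u' y| := by
    intro y
    rw [hVabs y, ← Real.rpow_mul (abs_nonneg _), hmul1, Real.rpow_one]
  -- bounds for q and m
  obtain ⟨Q, hQ⟩ := isCompact_Icc.exists_bound_of_continuousOn hq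
  obtain ⟨Mb, hMb⟩ := isCompact_Icc.exists_bound_of_continuousOn hm
  set Q' : ℝ := max Q 0 with hQ'def
  set Mb' : ℝ := max Mb 0 with hMb'def
  set K₁ : ℝ := Q' + |lam| * Mb' + C with hK₁def
  have hK₁ : 0 ≤ K₁ := by
    have : 0 ≤ Q' := le_max_right _ _
    have : 0 ≤ Mb' := le_max_right _ _
    positivity
  set K : ℝ := p + p' * K₁ with hKdef
  have hK : 0 ≤ K := by positivity
  set E : ℝ → ℝ := fun x => |u x| ^ p + |u' x| ^ p with hEdef
  set E' : ℝ → ℝ := fun x =>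
    (p * |u x| ^ (p - 2) * u x) * u' x + (p' * |V x| ^ (p' - 2) * V x) * w' x with hE'def
  have hucont : ContinuousOn u (Icc 0 T) := fun x hx =>
    (hu x hx).continuousAt.continuousWithinAt
  have hcont : ContinuousOn E (Icc 0 T) := by
    apply ContinuousOn.add
    · exact (hucont.abs).rpow_const (fun x _ => Or.inr hp0.le)
    · exact (hu'.abs).rpow_const (fun x _ => Or.inr hp0.le)
  have hEeq : E = fun y => |u y| ^ p + |V y| ^ p' := by
    funext y; rw [hEdef]; simp only; rw [hVp' y]
  have hderiv : ∀ x ∈ Ioo 0 T, HasDerivAt E (E' x) x := by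
    intro x hx
    have hxI : x ∈ Icc 0 T := ⟨le_of_lt hx.1, le_of_lt hx.2⟩
    have h1 := (hasDerivAt_abs_rpow (u x) hp).comp x (hu x hxI)
    have h2 := (hasDerivAt_abs_rpow (V x) hp').comp x (hw x hx)
    rw [hEeq]
    exact h1.add h2
  have hq0T := fun x (hx : x ∈ Icc 0 T) => (hQ x hx : ‖q x‖ ≤ Q)
  have hbound : ∀ x ∈ Ioo 0 T, |E' x| ≤ K * |E x| := by
    intro x hx
    have hxI : x ∈ Icc 0 T := ⟨le_of_lt hx.1, le_of_lt hx.2⟩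
    have hφ : |(|u x| ^ (p-2) * u x)| = |u x| ^ (p-1) := abs_phi' p (u x) hp
    -- bound on w'
    have hw'eq : w' x = q x * (|u x| ^ (p - 2) * u x)
        - lam * m x * (|u x| ^ (p - 2) * u x) - g x (u x) lam := by
      have := heq x hx; linarith
    have hw'b : |w' x| ≤ K₁ * |u x| ^ (p - 1) := by
      rw [hw'eq]
      calc |q x * (|u x| ^ (p - 2) * u x) - lam * m x * (|u x| ^ (p - 2) * u x)
            - g x (u x) lam|
          ≤ |q x * (|u x| ^ (p - 2) * u x) - lam * m x * (|u x| ^ (p - 2) * u x)|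
            + |g x (u x) lam| := abs_sub _ _
        _ ≤ |q x * (|u x| ^ (p - 2) * u x)| + |lam * m x * (|u x| ^ (p - 2) * u x)|
            + |g x (u x) lam| := by
            have := abs_sub (q x * (|u x| ^ (p - 2) * u x))
              (lam * m x * (|u x| ^ (p - 2) * u x))
            linarith
        _ ≤ Q' * |u x| ^ (p-1) + |lam| * Mb' * |u x| ^ (p-1) + C * |u x| ^ (p-1) := by
            gcongr ?_ + ?_ + ?_
            · rw [abs_mul, hφ]
              apply mul_le_mul_of_nonneg_right _ (Real.rpow_nonneg (abs_nonneg _) _)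
              exact le_trans (hQ x hxI) (le_max_left _ _)
            · rw [abs_mul, hφ, abs_mul]
              apply mul_le_mul_of_nonneg_right _ (Real.rpow_nonneg (abs_nonneg _) _)
              apply mul_le_mul_of_nonneg_left _ (abs_nonneg lam)
              exact le_trans (hMb x hxI) (le_max_left _ _)
            · exact hg x hxI (u x) (hM x hxI)
        _ = K₁ * |u x| ^ (p - 1) := by rw [hK₁def]; ring
    -- pieces of E'
    have hX : |u x| ^ (p-1) * |u' x| ≤ |E x| := by
      have hE0 : 0 ≤ E x := by
        rw [hEdef]
        exact add_nonneg (Real.rpow_nonneg (abs_nonneg _) _)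
          (Real.rpow_nonneg (abs_nonneg _) _)
      rw [abs_of_nonneg hE0, hEdef]
      exact young_aux (|u x|) (|u' x|) p (abs_nonneg _) (abs_nonneg _) hp
    have h1 : |(p * |u x| ^ (p - 2) * u x) * u' x| = p * (|u x| ^ (p-1) * |u' x|) := by
      rw [abs_mul, mul_assoc p, abs_mul, abs_of_pos hp0, hφ, mul_assoc]
    have h2 : |(p' * |V x| ^ (p' - 2) * V x) * w' x|
        = p' * (|u' x| * |w' x|) := by
      rw [abs_mul, mul_assoc p', abs_mul, abs_of_pos (by linarith : (0:ℝ) < p'),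
        abs_phi' p' (V x) hp', hVp1 x, mul_assoc]
    calc |E' x| ≤ |(p * |u x| ^ (p - 2) * u x) * u' x|
          + |(p' * |V x| ^ (p' - 2) * V x) * w' x| := abs_add_le _ _
      _ = p * (|u x| ^ (p-1) * |u' x|) + p' * (|u' x| * |w' x|) := by rw [h1, h2]
      _ ≤ p * |E x| + p' * (|u' x| * (K₁ * |u x| ^ (p-1))) := by
          gcongr
      _ = p * |E x| + (p' * K₁) * (|u x| ^ (p-1) * |u' x|) := by ring
      _ ≤ p * |E x| + (p' * K₁) * |E x| := by
          gcongr
      _ = K * |E x| := by rw [hKdef]; ring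
  have hEc : E x₀ = 0 := by
    rw [hEdef]; simp only [hu0, hu'0, abs_zero, Real.zero_rpow hpne]; ring
  have hE0 := gronwall_zero 0 T K hK E E' hcont hderiv hbound x₀ hx₀ hEc
  intro x hx
  have hEx := hE0 x hx
  by_contra hne
  have h1 : 0 < |u x| ^ p := Real.rpow_pos_of_pos (abs_pos.2 hne) p
  have h2 : 0 ≤ |u' x| ^ p := Real.rpow_nonneg (abs_nonneg _) _
  rw [hEdef] at hEx
  simp only at hEx
  linarith
end
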